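/- If U_{i-1}, U_i, U_{i+1}, U_{i+2} are nonnegative reals and we define the interface reconstructions U_{i+1/2,-} = U_i + (1/2)φ(θ_i)(U_{i+1} - U_i) and U_{i+1/2,+} = U_{i+1} - (1/2)φ(θ_{i+1})(U_{i+2} - U_{i+1}) with θ_j = (U_j - U_{j-1})/(U_{j+1} - U_j) (set θ_j = 0 if U_{j+1} = U_j), where φ is the Van Leer limiter, then U_{i+1/2,-} ≥ 0 and U_{i+1/2,+} ≥ 0. -/

import Mathlib

/-- Van Leer slope limiter. -/
noncomputable def vanLeer (θ : ℝ) : ℝ := (θ + |θ|) / (1 + |θ|)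

/-- Slope ratio θ_j built from three consecutive values (U_{j-1}, U_j, U_{j+1}),
set to 0 if the denominator vanishes. -/
noncomputable def slopeRatio (a b c : ℝ) : ℝ := if c = b then 0 else (b - a) / (c - b)

lemma vl_denom_pos (θ : ℝ) : 0 < 1 + |θ| := by positivity

lemma vl_nonneg (θ : ℝ) : 0 ≤ vanLeer θ := by
  unfold vanLeer
  apply div_nonneg _ (le_of_lt (vl_denom_pos θ))
  have := neg_abs_le θ; linarith

lemma vl_le_two (θ : ℝ) : vanLeer θ ≤ 2 := by
  unfold vanLeer
  rw [div_le_iff₀ (vl_denom_pos θ)]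
  have := le_abs_self θ
  nlinarith [abs_nonneg θ]

lemma vl_nonpos (θ : ℝ) (h : θ ≤ 0) : vanLeer θ = 0 := by
  unfold vanLeer
  rw [abs_of_nonpos h]
  simp

lemma vl_le_two_mul (θ : ℝ) (h : 0 ≤ θ) : vanLeer θ ≤ 2 * θ := by
  unfold vanLeer
  rw [abs_of_nonneg h, div_le_iff₀ (by positivity : (0:ℝ) < 1 + θ)]
  nlinarith

theorem reconstruction_nonneg
    (Uim1 Ui Uip1 Uip2 : ℝ)
    (h1 : 0 ≤ Uim1) (h2 : 0 ≤ Ui) (h3 : 0 ≤ Uip1) (h4 : 0 ≤ Uip2) :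
    0 ≤ Ui + (1 / 2) * vanLeer (slopeRatio Uim1 Ui Uip1) * (Uip1 - Ui) ∧
    0 ≤ Uip1 - (1 / 2) * vanLeer (slopeRatio Ui Uip1 Uip2) * (Uip2 - Uip1) := by
  constructor
  · set φ := vanLeer (slopeRatio Uim1 Ui Uip1) with hφ
    have h0 : 0 ≤ φ := vl_nonneg _
    have h2' : φ ≤ 2 := vl_le_two _
    rcases le_or_gt Ui Uip1 with h | h
    · nlinarith
    · nlinarith
  · rcases le_or_gt Uip2 Uip1 with hd | hd
    · have h0 : 0 ≤ vanLeer (slopeRatio Ui Uip1 Uip2) := vl_nonneg _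
      nlinarith
    · have hne : Uip2 ≠ Uip1 := by linarith
      have hsr : slopeRatio Ui Uip1 Uip2 = (Uip1 - Ui) / (Uip2 - Uip1) := by
        simp [slopeRatio, hne]
      set θ := (Uip1 - Ui) / (Uip2 - Uip1) with hθ
      rw [hsr]
      have hdpos : 0 < Uip2 - Uip1 := by linarith
      rcases le_or_gt θ 0 with ht | ht
      · rw [vl_nonpos θ ht]; linarith
      · have hle : vanLeer θ ≤ 2 * θ := vl_le_two_mul θ ht.le
        have hθd : θ * (Uip2 - Uip1) = Uip1 - Ui := by
          rw [hθ, div_mul_cancel₀ _ hdpos.ne']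
        nlinarith
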